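/- Up to scalar multiple, the Laurent polynomial f_λ(y) is the unique Laurent polynomial solution of the q-difference equation t(1−qy) f(q²y) − t^{1/2}(t−qy)(t^{−1/2}q^{λ₁}+t^{1/2}q^{λ₂}) f(qy) + (t²−qy) q^{λ₁+λ₂} f(y) = 0, for generic parameters q, t. -/

import Mathlib

set_option maxHeartbeats 1000000

open Finset

/-- The q-Pochhammer symbol `(a;q)_n`. -/
noncomputable def qPoch (a q : ℂ) (n : ℕ) : ℂ := ∏ j ∈ Finset.range n, (1 - a * q ^ j)

/-- Coefficient χ_k of the separated polynomial f_λ. -/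
noncomputable def chi (q t : ℂ) (l1 l2 k : ℤ) : ℂ :=
  (t⁻¹ ^ 2 * q) ^ (k - l1).toNat *
    (qPoch t q (k - l1).toNat * qPoch (q ^ (-(l2 - l1))) q (k - l1).toNat) /
    (qPoch q q (k - l1).toNat * qPoch (t⁻¹ * q ^ (1 - (l2 - l1))) q (k - l1).toNat)

/-- The separated polynomial f_λ(y) = Σ_{k=λ₁}^{λ₂} χ_k y^k. -/
noncomputable def fsep (q t : ℂ) (l1 l2 : ℤ) (y : ℂ) : ℂ :=
  ∑ k ∈ Finset.Icc l1 l2, chi q t l1 l2 k * y ^ k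

/-! ### Auxiliary lemmas -/

lemma laurent_zero (d : ℤ → ℂ) (s : Finset ℤ)
    (h : ∀ y : ℂ, y ≠ 0 → ∑ k ∈ s, d k * y ^ k = 0) :
    ∀ k ∈ s, d k = 0 := by
  rcases s.eq_empty_or_nonempty with rfl | hne
  · simp
  set n := s.min' hne with hn
  have hnle : ∀ k ∈ s, n ≤ k := fun k hk => s.min'_le k hk
  set p : Polynomial ℂ := ∑ k ∈ s, Polynomial.monomial (k - n).toNat (d k) with hp
  have hp0 : p = 0 := by
    apply Polynomial.eq_zero_of_infinite_isRoot
    apply Set.Infinite.mono (s := ({0}ᶜ : Set ℂ))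
    · intro y hy
      have hy0 : y ≠ 0 := hy
      have heval : ∀ k ∈ s, Polynomial.eval y (Polynomial.monomial (k - n).toNat (d k))
          = (d k * y ^ k) * y ^ (-n) := by
        intro k hk
        rw [Polynomial.eval_monomial, ← zpow_natCast y,
          Int.toNat_of_nonneg (by linarith [hnle k hk] : (0:ℤ) ≤ k - n),
          zpow_sub₀ hy0, div_eq_mul_inv, ← zpow_neg]
        ring
      show p.IsRoot y
      rw [Polynomial.IsRoot, hp, Polynomial.eval_finset_sum,
        Finset.sum_congr rfl heval, ← Finset.sum_mul, h y hy0, zero_mul]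
    · exact (Set.finite_singleton 0).infinite_compl
  intro k hk
  have hco : p.coeff ((k - n).toNat) = 0 := by rw [hp0]; simp
  rw [hp, Polynomial.finset_sum_coeff] at hco
  rw [Finset.sum_eq_single k (fun j hj hjk => by
      rw [Polynomial.coeff_monomial, if_neg]
      intro hEq
      have h1 : (0:ℤ) ≤ j - n := by linarith [hnle j hj]
      have h2 : (0:ℤ) ≤ k - n := by linarith [hnle k hk]
      omega) (fun hks => absurd hk hks)] at hco
  rwa [Polynomial.coeff_monomial, if_pos rfl] at hco

lemma qz_ne_one' {q : ℂ} (hq : ∀ n : ℕ, 1 ≤ n → q ^ n ≠ 1) :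
    ∀ m : ℤ, m ≠ 0 → q ^ m ≠ 1 := by
  intro m hm h
  rcases lt_or_gt_of_ne hm with hlt | hgt
  · have h' : q ^ (-m) = 1 := by rw [zpow_neg, h, inv_one]
    have : q ^ ((-m).toNat) = 1 := by
      rw [← h', ← zpow_natCast, Int.toNat_of_nonneg (by omega)]
    exact hq (-m).toNat (by omega) this
  · have : q ^ (m.toNat) = 1 := by
      rw [← h, ← zpow_natCast, Int.toNat_of_nonneg (by omega)]
    exact hq m.toNat (by omega) this

lemma qz_inj {q : ℂ} (hq0 : q ≠ 0) (hq : ∀ n : ℕ, 1 ≤ n → q ^ n ≠ 1)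
    {a b : ℤ} (hab : a ≠ b) : q ^ a ≠ q ^ b := by
  intro h
  apply qz_ne_one' hq (a - b) (sub_ne_zero.mpr hab)
  rw [zpow_sub₀ hq0, h, div_self (zpow_ne_zero _ hq0)]

lemma tq_ne {q t : ℂ} (hq0 : q ≠ 0) (ht : ∀ m : ℤ, t ≠ q ^ m) (a b : ℤ) :
    t * q ^ a ≠ q ^ b := by
  intro h
  apply ht (b - a)
  rw [zpow_sub₀ hq0, eq_div_iff (zpow_ne_zero _ hq0), h]

lemma q_ne_tq {q t : ℂ} (hq0 : q ≠ 0) (ht : ∀ m : ℤ, t ≠ q ^ m) (a b : ℤ) :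
    q ^ a ≠ t * q ^ b := fun h => tq_ne hq0 ht b a h.symm

lemma qPoch_succ (a q : ℂ) (n : ℕ) :
    qPoch a q (n + 1) = qPoch a q n * (1 - a * q ^ n) := by
  rw [qPoch, qPoch, Finset.prod_range_succ]

lemma qPoch_q_ne_zero {q : ℂ} (hq0 : q ≠ 0) (hq : ∀ n : ℕ, 1 ≤ n → q ^ n ≠ 1)
    (n : ℕ) : qPoch q q n ≠ 0 := by
  rw [qPoch]
  apply Finset.prod_ne_zero_iff.mpr
  intro j _ h
  apply qz_ne_one' hq ((j : ℤ) + 1) (by omega)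
  have : q * q ^ j = 1 := by linear_combination -h
  rw [zpow_add₀ hq0, zpow_one, zpow_natCast]
  linear_combination this

lemma qPoch_den_ne_zero {q t : ℂ} (hq0 : q ≠ 0) (ht0 : t ≠ 0)
    (ht : ∀ m : ℤ, t ≠ q ^ m) (m : ℤ) (n : ℕ) :
    qPoch (t⁻¹ * q ^ m) q n ≠ 0 := by
  rw [qPoch]
  apply Finset.prod_ne_zero_iff.mpr
  intro j _ h
  have h1 : t⁻¹ * q ^ m * q ^ j = 1 := by linear_combination -h
  field_simp at h1
  apply ht (m + (j : ℤ))
  rw [zpow_add₀ hq0, zpow_natCast]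
  exact h1.symm

lemma chi_base (q t : ℂ) (l1 l2 : ℤ) : chi q t l1 l2 l1 = 1 := by
  rw [chi]
  simp [qPoch]

lemma chi_rec {q t : ℂ} (hq0 : q ≠ 0) (ht0 : t ≠ 0)
    (hq : ∀ n : ℕ, 1 ≤ n → q ^ n ≠ 1) (ht : ∀ m : ℤ, t ≠ q ^ m)
    (l1 l2 k : ℤ) (h1 : l1 < k) :
    t * (q ^ k - q ^ l1) * (q ^ k - t * q ^ l2) * chi q t l1 l2 k
      = q * ((t * q ^ (k - 1) - q ^ l1) * (q ^ (k - 1) - q ^ l2)) * chi q t l1 l2 (k - 1) := by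
  have hn : (k - l1).toNat = (k - 1 - l1).toNat + 1 := by omega
  set n : ℕ := (k - 1 - l1).toNat with hdefn
  have hZn : ((n : ℤ)) = k - 1 - l1 := Int.toNat_of_nonneg (by omega)
  have hZ : (q : ℂ) ^ (n : ℕ) = q ^ (k - 1 - l1 : ℤ) := by
    rw [← zpow_natCast, hZn]
  have hX : (q : ℂ) ^ l1 ≠ 0 := zpow_ne_zero _ hq0
  have hY : (q : ℂ) ^ l2 ≠ 0 := zpow_ne_zero _ hq0
  have hden1 : (1 : ℂ) - q * q ^ (n : ℕ) ≠ 0 := by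
    intro h
    apply qz_ne_one' hq (k - l1) (by omega)
    rw [show k - l1 = 1 + (k - 1 - l1) by ring, zpow_add₀ hq0, zpow_one, ← hZ]
    linear_combination -h
  have hden2 : (1 : ℂ) - (t⁻¹ * q ^ (1 - (l2 - l1))) * q ^ (n : ℕ) ≠ 0 := by
    intro h
    have h2 : t⁻¹ * q ^ (k - l2) = 1 := by
      rw [show k - l2 = (1 - (l2 - l1)) + (k - 1 - l1) by ring, zpow_add₀ hq0, ← hZ]
      linear_combination -h
    field_simp at h2
    exact ht (k - l2) h2.symm
  have hPq := qPoch_q_ne_zero hq0 hq n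
  have hPd := qPoch_den_ne_zero hq0 ht0 ht (1 - (l2 - l1)) n
  have hqk : (q : ℂ) ^ k = q ^ l1 * q ^ (k - 1 - l1 : ℤ) * q := by
    rw [← zpow_add₀ hq0, ← zpow_add_one₀ hq0]; congr 1; ring
  have hqk1 : (q : ℂ) ^ (k - 1) = q ^ l1 * q ^ (k - 1 - l1 : ℤ) := by
    rw [← zpow_add₀ hq0]; congr 1; ring
  have hmu : (q : ℂ) ^ (-(l2 - l1)) = q ^ l1 / q ^ l2 := by
    rw [← zpow_sub₀ hq0]; congr 1; ring
  have hdl : (q : ℂ) ^ (1 - (l2 - l1)) = q * q ^ l1 / q ^ l2 := by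
    have h9 : q * (q:ℂ) ^ l1 / q ^ l2 = q ^ (1 + l1 - l2) := by
      rw [zpow_sub₀ hq0, zpow_add₀ hq0, zpow_one]
    rw [h9]; congr 1; ring
  set X := (q : ℂ) ^ l1 with hXdef
  set Y := (q : ℂ) ^ l2 with hYdef
  set Z := (q : ℂ) ^ (k - 1 - l1 : ℤ) with hZdef
  have hZ0 : Z ≠ 0 := zpow_ne_zero _ hq0
  set R : ℂ := (t⁻¹ ^ 2 * q) * (1 - t * Z) * (1 - (X / Y) * Z)
      / ((1 - q * Z) * (1 - t⁻¹ * (q * X / Y) * Z)) with hRdef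
  have hchi : chi q t l1 l2 k = chi q t l1 l2 (k - 1) * R := by
    rw [chi, chi, hn, ← hdefn]
    rw [qPoch_succ, qPoch_succ, qPoch_succ, qPoch_succ, pow_succ, hZ, hmu, hdl, hRdef]
    rw [hZ] at hden1 hden2
    rw [hdl] at hden2
    field_simp
  rw [hchi, hqk, hqk1]
  have hAR : t * (X * Z * q - X) * (X * Z * q - t * Y) * R
      = q * ((t * (X * Z) - X) * (X * Z - Y)) := by
    rw [hZ] at hden1 hden2
    rw [hdl] at hden2
    rw [hRdef, ← mul_div_assoc, div_eq_iff (mul_ne_zero hden1 hden2)]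
    field_simp
    ring
  linear_combination chi q t l1 l2 (k - 1) * hAR

/-! ### Main theorem -/

/-- Up to scalar multiple, f_λ is the unique Laurent polynomial solution of the
separated q-difference equation, for generic parameters q (not a root of unity)
and t (not an integer power of q). -/
theorem separated_equation_unique_laurent_solution (q t s : ℂ)
    (hq0 : q ≠ 0) (ht0 : t ≠ 0) (hs : s ^ 2 = t)
    (hq : ∀ n : ℕ, 1 ≤ n → q ^ n ≠ 1) (ht : ∀ m : ℤ, t ≠ q ^ m)
    (l1 l2 : ℤ) (hl : l1 ≤ l2) (c : ℤ →₀ ℂ)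
    (heq : ∀ y : ℂ, y ≠ 0 →
      t * (1 - q * y) * (∑ k ∈ c.support, c k * (q ^ 2 * y) ^ k)
        - s * (t - q * y) * (s⁻¹ * q ^ l1 + s * q ^ l2) *
            (∑ k ∈ c.support, c k * (q * y) ^ k)
        + (t ^ 2 - q * y) * q ^ (l1 + l2) * (∑ k ∈ c.support, c k * y ^ k) = 0) :
    ∃ A : ℂ, ∀ y : ℂ, y ≠ 0 →
      (∑ k ∈ c.support, c k * y ^ k) = A * fsep q t l1 l2 y := by
  classical
  have hs0 : s ≠ 0 := by
    intro h; rw [h] at hs; simp at hs; exact ht0 hs.symm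
  have hsinv : s * s⁻¹ = 1 := mul_inv_cancel₀ hs0
  set S : Finset ℤ := c.support ∪ c.support.image (· + 1) with hSdef
  set d : ℤ → ℂ := fun k =>
    t * (q ^ k - q ^ l1) * (q ^ k - t * q ^ l2) * c k
      - q * ((t * q ^ (k - 1) - q ^ l1) * (q ^ (k - 1) - q ^ l2)) * c (k - 1) with hddef
  -- the functional equation translates into the vanishing of the Laurent coefficients d k
  have key : ∀ y : ℂ, y ≠ 0 → ∑ k ∈ S, d k * y ^ k = 0 := by
    intro y hy
    have h0 := heq y hy
    have e1 : ∑ k ∈ S, (t * (q ^ k - q ^ l1) * (q ^ k - t * q ^ l2) * c k) * y ^ k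
        = ∑ k ∈ c.support, (t * (q ^ k - q ^ l1) * (q ^ k - t * q ^ l2) * c k) * y ^ k := by
      symm
      apply Finset.sum_subset Finset.subset_union_left
      intro k _ hk
      rw [Finsupp.notMem_support_iff.mp hk]; ring
    have e2 : ∑ k ∈ S, (q * ((t * q ^ (k - 1) - q ^ l1) * (q ^ (k - 1) - q ^ l2)) * c (k - 1)) * y ^ k
        = ∑ j ∈ c.support, (q * ((t * q ^ j - q ^ l1) * (q ^ j - q ^ l2)) * c j) * (y ^ j * y) := by
      have e2a : ∑ k ∈ S, (q * ((t * q ^ (k - 1) - q ^ l1) * (q ^ (k - 1) - q ^ l2)) * c (k - 1)) * y ^ k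
          = ∑ k ∈ c.support.image (· + 1),
              (q * ((t * q ^ (k - 1) - q ^ l1) * (q ^ (k - 1) - q ^ l2)) * c (k - 1)) * y ^ k := by
        symm
        apply Finset.sum_subset Finset.subset_union_right
        intro k _ hk
        have hc : c (k - 1) = 0 := by
          by_contra hc
          exact hk (Finset.mem_image.mpr ⟨k - 1, Finsupp.mem_support_iff.mpr hc, by ring⟩)
        rw [hc]; ring
      rw [e2a, Finset.sum_image (by intro a _ b _ h; simp only at h; omega)]
      apply Finset.sum_congr rfl
      intro j _
      have hj1 : (j : ℤ) + 1 - 1 = j := by ring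
      rw [hj1, zpow_add_one₀ hy]
    have esplit : ∑ k ∈ S, d k * y ^ k
        = (∑ k ∈ c.support, (t * (q ^ k - q ^ l1) * (q ^ k - t * q ^ l2) * c k) * y ^ k)
          - ∑ j ∈ c.support, (q * ((t * q ^ j - q ^ l1) * (q ^ j - q ^ l2)) * c j) * (y ^ j * y) := by
      rw [← e1, ← e2, ← Finset.sum_sub_distrib]
      apply Finset.sum_congr rfl
      intro k _
      rw [hddef]; ring
    rw [esplit, ← h0]
    rw [Finset.mul_sum, Finset.mul_sum, Finset.mul_sum, ← Finset.sum_sub_distrib,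
      ← Finset.sum_sub_distrib, ← Finset.sum_add_distrib]
    apply Finset.sum_congr rfl
    intro k _
    have h1 : ((q:ℂ) ^ 2 * y) ^ k = (q ^ k) ^ 2 * y ^ k := by
      rw [mul_zpow]
      congr 1
      rw [← zpow_natCast q 2, ← zpow_mul, mul_comm, zpow_mul, zpow_natCast]
    have h2 : ((q:ℂ) * y) ^ k = q ^ k * y ^ k := mul_zpow q y k
    have h3 : (q:ℂ) ^ (l1 + l2) = q ^ l1 * q ^ l2 := zpow_add₀ hq0 l1 l2
    rw [h1, h2, h3]
    linear_combination ((t - q * y) * q ^ k * c k * y ^ k) *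
      ((q:ℂ) ^ l1 * hsinv + (q:ℂ) ^ l2 * hs)
  have hd0 : ∀ k ∈ S, d k = 0 := laurent_zero d S key
  have hrec : ∀ k : ℤ,
      t * (q ^ k - q ^ l1) * (q ^ k - t * q ^ l2) * c k
        = q * ((t * q ^ (k - 1) - q ^ l1) * (q ^ (k - 1) - q ^ l2)) * c (k - 1) := by
    intro k
    by_cases hk : k ∈ S
    · have h : t * (q ^ k - q ^ l1) * (q ^ k - t * q ^ l2) * c k
          - q * ((t * q ^ (k - 1) - q ^ l1) * (q ^ (k - 1) - q ^ l2)) * c (k - 1) = 0 :=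
        hd0 k hk
      exact sub_eq_zero.mp h
    · have hc1 : c k = 0 := by
        apply Finsupp.notMem_support_iff.mp
        intro hmem; exact hk (Finset.mem_union_left _ hmem)
      have hc2 : c (k - 1) = 0 := by
        apply Finsupp.notMem_support_iff.mp
        intro hmem
        exact hk (Finset.mem_union_right _
          (Finset.mem_image.mpr ⟨k - 1, hmem, by ring⟩))
      rw [hc1, hc2]; ring
  -- nonvanishing of the leading/trailing coefficients
  have hAne : ∀ k : ℤ, k ≠ l1 → t * (q ^ k - q ^ l1) * (q ^ k - t * q ^ l2) ≠ 0 := by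
    intro k hk
    exact mul_ne_zero (mul_ne_zero ht0 (sub_ne_zero.mpr (qz_inj hq0 hq hk)))
      (sub_ne_zero.mpr (q_ne_tq hq0 ht k l2))
  have hBne : ∀ k : ℤ, k ≠ l2 → (t * q ^ k - q ^ l1) * (q ^ k - q ^ l2) ≠ 0 := by
    intro k hk
    exact mul_ne_zero (sub_ne_zero.mpr (tq_ne hq0 ht k l1))
      (sub_ne_zero.mpr (qz_inj hq0 hq hk))
  -- vanishing above l2
  have hup : ∀ m : ℕ, c (l2 + 1 + m) = 0 := by
    intro m
    induction m with
    | zero =>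
      have h := hrec (l2 + 1)
      have hB : (q:ℂ) ^ (l2 + 1 - 1) - q ^ l2 = 0 := by
        rw [show l2 + 1 - 1 = l2 by ring, sub_self]
      rw [hB, mul_zero, mul_zero, zero_mul] at h
      have := hAne (l2 + 1) (by omega)
      have hc := (mul_eq_zero.mp h).resolve_left this
      simpa using hc
    | succ m ih =>
      have h := hrec (l2 + 1 + (m + 1 : ℕ))
      have harg : (l2 + 1 + ((m : ℕ) + 1 : ℕ) - 1 : ℤ) = l2 + 1 + m := by
        push_cast; ring
      rw [harg, ih, mul_zero] at h
      have := hAne (l2 + 1 + ((m : ℕ) + 1 : ℕ)) (by push_cast; omega)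
      have hc := (mul_eq_zero.mp h).resolve_left this
      exact hc
  -- vanishing below l1
  have hdown : ∀ m : ℕ, c (l1 - 1 - m) = 0 := by
    intro m
    induction m with
    | zero =>
      have h := hrec l1
      rw [sub_self, mul_zero, zero_mul, zero_mul] at h
      have hq' : (q:ℂ) ≠ 0 := hq0
      have hB := hBne (l1 - 1) (by omega)
      have hc : c (l1 - 1) = 0 := by
        have h' := h.symm
        rcases mul_eq_zero.mp h' with h'' | h''
        · rcases mul_eq_zero.mp h'' with h3 | h3
          · exact absurd h3 hq'
          · exact absurd h3 hB
        · exact h''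
      simpa using hc
    | succ m ih =>
      have h := hrec (l1 - 1 - m)
      rw [ih, mul_zero] at h
      have hB := hBne (l1 - 1 - (m:ℕ) - 1) (by omega)
      have hc : c (l1 - 1 - (m:ℕ) - 1) = 0 := by
        rcases mul_eq_zero.mp h.symm with h'' | h''
        · rcases mul_eq_zero.mp h'' with h3 | h3
          · exact absurd h3 hq0
          · exact absurd h3 hB
        · exact h''
      have harg : (l1 - 1 - ((m : ℕ) + 1 : ℕ) : ℤ) = l1 - 1 - (m:ℕ) - 1 := by push_cast; ring
      rw [harg]
      exact hc
  -- on [l1, l2] the coefficients are proportional to chi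
  have hmid : ∀ m : ℕ, l1 + m ≤ l2 → c (l1 + m) = c l1 * chi q t l1 l2 (l1 + m) := by
    intro m
    induction m with
    | zero =>
      intro _
      simp [chi_base]
    | succ m ih =>
      intro hm
      have hm' : l1 + (m : ℕ) ≤ l2 := by push_cast at hm ⊢; omega
      have ihm := ih hm'
      set k : ℤ := l1 + ((m : ℕ) + 1 : ℕ) with hkdef
      have hkgt : l1 < k := by rw [hkdef]; push_cast; omega
      have hk1 : k - 1 = l1 + (m : ℕ) := by rw [hkdef]; push_cast; ring
      have hcr := chi_rec hq0 ht0 hq ht l1 l2 k hkgt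
      have hr := hrec k
      rw [hk1] at hcr hr
      rw [ihm] at hr
      have hEq : t * (q ^ k - q ^ l1) * (q ^ k - t * q ^ l2) * c k
          = t * (q ^ k - q ^ l1) * (q ^ k - t * q ^ l2) * (c l1 * chi q t l1 l2 k) := by
        rw [hr]
        linear_combination c l1 * hcr.symm
      exact mul_left_cancel₀ (hAne k (by omega)) hEq
  have hall : ∀ k ∈ Finset.Icc l1 l2, c k = c l1 * chi q t l1 l2 k := by
    intro k hk
    rw [Finset.mem_Icc] at hk
    have hm : k = l1 + ((k - l1).toNat : ℤ) := by omega
    rw [hm]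
    exact hmid (k - l1).toNat (by omega)
  have hout : ∀ k : ℤ, k ∉ Finset.Icc l1 l2 → c k = 0 := by
    intro k hk
    rw [Finset.mem_Icc] at hk
    push_neg at hk
    by_cases h1 : l1 ≤ k
    · have h2 : l2 < k := hk h1
      have hm : k = l2 + 1 + ((k - l2 - 1).toNat : ℤ) := by omega
      rw [hm]; exact hup (k - l2 - 1).toNat
    · push_neg at h1
      have hm : k = l1 - 1 - ((l1 - 1 - k).toNat : ℤ) := by omega
      rw [hm]; exact hdown (l1 - 1 - k).toNat
  have hsupp : c.support ⊆ Finset.Icc l1 l2 := by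
    intro k hk
    by_contra hkk
    exact (Finsupp.mem_support_iff.mp hk) (hout k hkk)
  refine ⟨c l1, fun y hy => ?_⟩
  have hsum : ∑ k ∈ c.support, c k * y ^ k = ∑ k ∈ Finset.Icc l1 l2, c k * y ^ k := by
    apply Finset.sum_subset hsupp
    intro k _ hk
    rw [Finsupp.notMem_support_iff.mp hk]; ring
  rw [hsum, fsep, Finset.mul_sum]
  apply Finset.sum_congr rfl
  intro k hk
  rw [hall k hk]; ring
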